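/- Let X_n, Y_n, and X be real-valued random variables such that X_n converges in distribution to X, Y_n converges in distribution to X, and the cumulative distribution function F_X of X is continuous. Fix α ∈ (0,1) and let (ξ_n) be a sequence of real numbers satisfying P(Y_n ≤ ξ_n) = α for every n. Then P(X_n ≤ ξ_n) → α as n → ∞. -/
import Mathlib


open MeasureTheory ProbabilityTheory Filter
open scoped Topology

lemma exists_cdf_eq (μ : Measure ℝ) [IsProbabilityMeasure μ]
    (hcont : Continuous (cdf μ)) {t : ℝ} (ht0 : 0 < t) (ht1 : t < 1) :
    ∃ a : ℝ, cdf μ a = t := by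
  obtain ⟨c, hc⟩ := ((tendsto_cdf_atBot μ).eventually (eventually_lt_nhds ht0)).exists
  obtain ⟨d, hd⟩ := ((tendsto_cdf_atTop μ).eventually (eventually_gt_nhds ht1)).exists
  have hcd : c ≤ d := by
    by_contra h
    exact absurd (monotone_cdf μ (le_of_not_ge h)) (by linarith)
  have := intermediate_value_Icc hcd hcont.continuousOn (a := c) (b := d)
  obtain ⟨a, -, ha⟩ := this ⟨hc.le, hd.le⟩
  exact ⟨a, ha⟩

/-- If `X_n → X` and `Y_n → X` in distribution (expressed via pointwise convergence of
CDFs, which is equivalent to convergence in distribution since the CDF of `X` is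
continuous), `α ∈ (0,1)`, and `ξ_n` is an `α`-quantile of `Y_n` for every `n`
(i.e. `P(Y_n ≤ ξ_n) = α`), then `P(X_n ≤ ξ_n) → α`. -/
theorem tendsto_cdf_at_quantiles
    (μX μY : ℕ → Measure ℝ) (μ : Measure ℝ)
    [∀ n, IsProbabilityMeasure (μX n)] [∀ n, IsProbabilityMeasure (μY n)]
    [IsProbabilityMeasure μ]
    (hcont : Continuous (cdf μ))
    (hX : ∀ x : ℝ, Tendsto (fun n => cdf (μX n) x) atTop (𝓝 (cdf μ x)))
    (hY : ∀ x : ℝ, Tendsto (fun n => cdf (μY n) x) atTop (𝓝 (cdf μ x)))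
    (α : ℝ) (hα : α ∈ Set.Ioo (0 : ℝ) 1)
    (ξ : ℕ → ℝ) (hξ : ∀ n, cdf (μY n) (ξ n) = α) :
    Tendsto (fun n => cdf (μX n) (ξ n)) atTop (𝓝 α) := by
  obtain ⟨hα0, hα1⟩ := hα
  rw [tendsto_order]
  constructor
  · intro c hc
    set t : ℝ := (max c 0 + α) / 2 with ht
    have htc : c < t := by
      have := le_max_left c 0
      simp only [ht]; linarith
    have ht0 : 0 < t := by
      have := le_max_right c 0
      simp only [ht]; linarith
    have htα : t < α := by
      have h1 : max c 0 < α := max_lt hc hα0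
      simp only [ht]; linarith
    obtain ⟨a, ha⟩ := exists_cdf_eq μ hcont ht0 (htα.trans hα1)
    -- eventually a ≤ ξ n
    have h1 : ∀ᶠ n in atTop, cdf (μY n) a < α := by
      refine (hY a).eventually (eventually_lt_nhds ?_)
      rwa [ha]
    have h2 : ∀ᶠ n in atTop, c < cdf (μX n) a := by
      refine (hX a).eventually (eventually_gt_nhds ?_)
      rwa [ha]
    filter_upwards [h1, h2] with n hn1 hn2
    have haξ : a ≤ ξ n := by
      by_contra h
      have := monotone_cdf (μY n) (le_of_not_ge h)
      rw [hξ n] at this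
      linarith
    exact hn2.trans_le (monotone_cdf (μX n) haξ)
  · intro c hc
    set t : ℝ := (α + min c 1) / 2 with ht
    have htc : t < c := by
      have := min_le_left c 1
      simp only [ht]; linarith
    have ht1 : t < 1 := by
      have := min_le_right c 1
      simp only [ht]; linarith
    have htα : α < t := by
      have h1 : α < min c 1 := lt_min hc hα1
      simp only [ht]; linarith
    obtain ⟨b, hb⟩ := exists_cdf_eq μ hcont (hα0.trans htα) ht1
    have h1 : ∀ᶠ n in atTop, α < cdf (μY n) b := by
      refine (hY b).eventually (eventually_gt_nhds ?_)
      rwa [hb]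
    have h2 : ∀ᶠ n in atTop, cdf (μX n) b < c := by
      refine (hX b).eventually (eventually_lt_nhds ?_)
      rwa [hb]
    filter_upwards [h1, h2] with n hn1 hn2
    have hξb : ξ n ≤ b := by
      by_contra h
      have := monotone_cdf (μY n) (le_of_not_ge h)
      rw [hξ n] at this
      linarith
    exact (monotone_cdf (μX n) hξb).trans_lt hn2
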